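/- arXiv:2508.02209 — 2 statements merged into one kernel-verified Lean document; each statement's English description precedes it below -/
import Mathlib

section
/- For w = 1/2 and p ∈ (1/2,1), the joint accuracy with majority voting over m = 2r+1 (odd) independent voters, P_m = Σ_{k=r+1}^{2r+1} C(2r+1,k) p^k (1-p)^{2r+1-k}, is at least p for every r ≥ 0. -/
open Finset

private lemma ch_aux (r j : ℕ) :
    (2*r+3).choose (r+2+j)
      = (2*r+1).choose (r+j) + 2*((2*r+1).choose (r+1+j)) + (2*r+1).choose (r+2+j) := by
  have a1 : (2*r+2).choose (r+1+j) = (2*r+1).choose (r+j) + (2*r+1).choose (r+1+j) := by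
    rw [show 2*r+2 = (2*r+1)+1 from by omega, show r+1+j = (r+j)+1 from by omega]
    exact Nat.choose_succ_succ _ _
  have a2 : (2*r+2).choose (r+2+j) = (2*r+1).choose (r+1+j) + (2*r+1).choose (r+2+j) := by
    rw [show 2*r+2 = (2*r+1)+1 from by omega, show r+2+j = (r+1+j)+1 from by omega]
    exact Nat.choose_succ_succ _ _
  have a3 : (2*r+3).choose (r+2+j) = (2*r+2).choose (r+1+j) + (2*r+2).choose (r+2+j) := by
    rw [show 2*r+3 = (2*r+2)+1 from by omega, show r+2+j = (r+1+j)+1 from by omega]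
    exact Nat.choose_succ_succ _ _
  rw [a3, a2, a1]; ring

private lemma step_aux (p q : ℝ) (r : ℕ) :
    ∑ j ∈ range (r+2), ((2*(r+1)+1).choose ((r+1)+1+j) : ℝ) * p^((r+1)+1+j) * q^((r+1)-j)
      = (p+q)^2 * (∑ j ∈ range (r+1), ((2*r+1).choose (r+1+j) : ℝ) * p^(r+1+j) * q^(r-j))
        + ((2*r+1).choose r : ℝ) * p^(r+1) * q^(r+1) * (p-q) := by
  set S : ℝ := ∑ j ∈ range (r+1), ((2*r+1).choose (r+1+j) : ℝ) * p^(r+1+j) * q^(r-j) with hS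
  have hsplit : ∑ j ∈ range (r+2), ((2*(r+1)+1).choose ((r+1)+1+j) : ℝ) * p^((r+1)+1+j) * q^((r+1)-j)
      = (∑ j ∈ range (r+2), ((2*r+1).choose (r+j) : ℝ) * p^(r+2+j) * q^(r+1-j))
        + 2 * (∑ j ∈ range (r+2), ((2*r+1).choose (r+1+j) : ℝ) * p^(r+2+j) * q^(r+1-j))
        + (∑ j ∈ range (r+2), ((2*r+1).choose (r+2+j) : ℝ) * p^(r+2+j) * q^(r+1-j)) := by
    rw [Finset.mul_sum, ← Finset.sum_add_distrib, ← Finset.sum_add_distrib]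
    refine Finset.sum_congr rfl fun j hj => ?_
    have h1 : 2*(r+1)+1 = 2*r+3 := by ring
    have h2 : (r+1)+1+j = r+2+j := by ring
    rw [h1, h2, ch_aux r j]
    push_cast
    ring
  have hX : ∑ j ∈ range (r+2), ((2*r+1).choose (r+j) : ℝ) * p^(r+2+j) * q^(r+1-j)
      = p^2 * S + ((2*r+1).choose r : ℝ) * p^(r+2) * q^(r+1) := by
    rw [Finset.sum_range_succ', hS, Finset.mul_sum]
    congr 1
    refine Finset.sum_congr rfl fun i hi => ?_
    have e1 : r + (i+1) = r+1+i := by ring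
    have e2 : r+2+(i+1) = (r+1+i)+2 := by ring
    have e3 : r+1-(i+1) = r-i := by omega
    rw [e1, e2, e3]
    ring
  have hY : ∑ j ∈ range (r+2), ((2*r+1).choose (r+1+j) : ℝ) * p^(r+2+j) * q^(r+1-j)
      = p*q*S := by
    rw [Finset.sum_range_succ]
    have hz : (2*r+1).choose (r+1+(r+1)) = 0 := Nat.choose_eq_zero_of_lt (by omega)
    rw [hz]
    simp only [Nat.cast_zero, zero_mul]
    rw [hS, Finset.mul_sum, add_zero]
    refine Finset.sum_congr rfl fun i hi => ?_
    simp only [Finset.mem_range] at hi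
    have e2 : r+2+i = (r+1+i)+1 := by ring
    have e3 : r+1-i = (r-i)+1 := by omega
    rw [e2, e3]
    ring
  have hZ : ∑ j ∈ range (r+2), ((2*r+1).choose (r+2+j) : ℝ) * p^(r+2+j) * q^(r+1-j)
      = q^2 * S - ((2*r+1).choose (r+1) : ℝ) * p^(r+1) * q^(r+2) := by
    rw [Finset.sum_range_succ]
    have hz : (2*r+1).choose (r+2+(r+1)) = 0 := Nat.choose_eq_zero_of_lt (by omega)
    rw [hz]
    simp only [Nat.cast_zero, zero_mul, add_zero]
    rw [Finset.sum_range_succ]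
    have hz2 : (2*r+1).choose (r+2+r) = 0 := Nat.choose_eq_zero_of_lt (by omega)
    rw [hz2]
    simp only [Nat.cast_zero, zero_mul, add_zero]
    rw [hS, Finset.mul_sum, Finset.sum_range_succ']
    have e0 : q^2 * (((2*r+1).choose (r+1+0) : ℝ) * p^(r+1+0) * q^(r-0))
        = ((2*r+1).choose (r+1) : ℝ) * p^(r+1) * q^(r+2) := by
      simp only [add_zero, Nat.sub_zero]
      ring
    rw [e0]
    rw [add_sub_cancel_right]
    refine Finset.sum_congr rfl fun i hi => ?_
    simp only [Finset.mem_range] at hi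
    have e1 : r+1+(i+1) = r+2+i := by ring
    have e2 : r-(i+1) = r-1-i := by omega
    have e3 : r+1-i = (r-1-i)+2 := by omega
    rw [e1, e2, e3]
    ring
  have hsymm : (2*r+1).choose (r+1) = (2*r+1).choose r := by
    have := Nat.choose_symm (show r ≤ 2*r+1 by omega)
    rwa [show 2*r+1-r = r+1 from by omega] at this
  rw [hsplit, hX, hY, hZ, hsymm]
  ring

private lemma T_ge (p q : ℝ) (hpq : p + q = 1) (hq : 0 < q) (hpgt : q < p) (r : ℕ) :
    p ≤ ∑ j ∈ range (r+1), ((2*r+1).choose (r+1+j) : ℝ) * p^(r+1+j) * q^(r-j) := by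
  induction r with
  | zero => simp
  | succ r ih =>
    have hstep := step_aux p q r
    have hp0 : 0 < p := lt_trans hq hpgt
    have hterm : 0 ≤ ((2*r+1).choose r : ℝ) * p^(r+1) * q^(r+1) * (p-q) := by
      have h1 : (0:ℝ) ≤ ((2*r+1).choose r : ℝ) * p^(r+1) * q^(r+1) := by positivity
      exact mul_nonneg h1 (by linarith)
    calc p ≤ ∑ j ∈ range (r+1), ((2*r+1).choose (r+1+j) : ℝ) * p^(r+1+j) * q^(r-j) := ih
      _ ≤ (p+q)^2 * (∑ j ∈ range (r+1), ((2*r+1).choose (r+1+j) : ℝ) * p^(r+1+j) * q^(r-j))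
            + ((2*r+1).choose r : ℝ) * p^(r+1) * q^(r+1) * (p-q) := by
          rw [hpq]; linarith
      _ = ∑ j ∈ range (r+1+1), ((2*(r+1)+1).choose ((r+1)+1+j) : ℝ) * p^((r+1)+1+j) * q^((r+1)-j) := hstep.symm

/-- Condorcet jury theorem lower bound: for `p ∈ (1/2,1)`, the
majority-vote accuracy over `m = 2r+1` independent voters,
`P_m = ∑_{k=r+1}^{2r+1} C(2r+1,k) p^k (1-p)^{2r+1-k}`, is at least `p`. -/
theorem condorcet_lower_bound (p : ℝ) (hp : p ∈ Set.Ioo (1/2 : ℝ) 1) (r : ℕ) :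
    p ≤ ∑ k ∈ Finset.Icc (r + 1) (2 * r + 1),
        ((2 * r + 1).choose k : ℝ) * p ^ k * (1 - p) ^ (2 * r + 1 - k) := by
  obtain ⟨h1, h2⟩ := hp
  have hq : 0 < 1 - p := by linarith
  have hpgt : 1 - p < p := by linarith
  have hpq : p + (1 - p) = 1 := by ring
  have := T_ge p (1-p) hpq hq hpgt r
  rw [← Finset.Ico_add_one_right_eq_Icc, Finset.sum_Ico_eq_sum_range]
  have hcount : 2*r+1+1 - (r+1) = r+1 := by omega
  rw [hcount]
  refine le_trans this (le_of_eq (Finset.sum_congr rfl fun i hi => ?_))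
  simp only [Finset.mem_range] at hi
  rw [show 2*r+1 - (r+1+i) = r - i from by omega]
end

section
/- For p ∈ (1/2,1), the majority-vote accuracy over an odd number of voters is strictly increasing in the number of voters: P_{2r+3} > P_{2r+1} for all r ≥ 0, where P_{2r+1} = Σ_{k=r+1}^{2r+1} C(2r+1,k) p^k (1-p)^{2r+1-k}. -/
/-- for `p ∈ (1/2,1)`, the majority-vote accuracy over an odd
number of voters is strictly increasing: `P_{2r+3} > P_{2r+1}` for all `r ≥ 0`,
where `P_{2r+1} = ∑_{k=r+1}^{2r+1} C(2r+1,k) p^k (1-p)^{2r+1-k}`. -/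
theorem majority_accuracy_strict_increasing (p : ℝ) (hp : p ∈ Set.Ioo (1/2 : ℝ) 1) (r : ℕ) :
    ∑ k ∈ Finset.Icc (r + 1) (2 * r + 1),
        ((2 * r + 1).choose k : ℝ) * p ^ k * (1 - p) ^ (2 * r + 1 - k)
      < ∑ k ∈ Finset.Icc (r + 2) (2 * r + 3),
          ((2 * r + 3).choose k : ℝ) * p ^ k * (1 - p) ^ (2 * r + 3 - k) := by
  obtain ⟨hp1, hp2⟩ := hp
  set q : ℝ := 1 - p with hq
  have hq0 : 0 < q := by rw [hq]; linarith
  have hp0 : 0 < p := by linarith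
  set b : ℕ → ℝ := fun k => ((2 * r + 1).choose k : ℝ) * p ^ k * q ^ (2 * r + 1 - k) with hb
  set S : ℝ := ∑ k ∈ Finset.Icc (r + 1) (2 * r + 1), b k with hS
  -- b vanishes above 2r+1
  have bzero : ∀ k, 2 * r + 1 < k → b k = 0 := by
    intro k hk
    simp [hb, Nat.choose_eq_zero_of_lt hk]
  -- splitting S at the bottom
  have hSsplit : S = b (r + 1) + ∑ k ∈ Finset.Icc (r + 2) (2 * r + 1), b k := by
    rw [hS, Finset.Icc_eq_cons_Ioc (by omega), Finset.sum_cons, ← Finset.Icc_add_one_left_eq_Ioc]; rfl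
  -- reindex RHS
  have hre : ∑ k ∈ Finset.Icc (r + 2) (2 * r + 3),
        ((2 * r + 3).choose k : ℝ) * p ^ k * q ^ (2 * r + 3 - k)
      = ∑ j ∈ Finset.Icc r (2 * r + 1),
        ((2 * r + 3).choose (j + 2) : ℝ) * p ^ (j + 2) * q ^ (2 * r + 1 - j) := by
    rw [show Finset.Icc (r + 2) (2 * r + 3) = (Finset.Icc r (2 * r + 1)).map
        (addRightEmbedding 2) by rw [Finset.map_add_right_Icc], Finset.sum_map]
    refine Finset.sum_congr rfl fun j hj => ?_
    simp only [addRightEmbedding_apply]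
    rw [show 2 * r + 3 - (j + 2) = 2 * r + 1 - j by omega]
  -- Pascal
  have pas : ∀ j : ℕ, ((2 * r + 3).choose (j + 2) : ℝ)
      = ((2 * r + 1).choose j : ℝ) + 2 * ((2 * r + 1).choose (j + 1) : ℝ)
        + ((2 * r + 1).choose (j + 2) : ℝ) := by
    intro j
    have a1 : (2 * r + 3).choose (j + 2)
        = (2 * r + 2).choose (j + 1) + (2 * r + 2).choose (j + 2) := by
      rw [show 2 * r + 3 = (2 * r + 2) + 1 by ring, show j + 2 = (j + 1) + 1 by ring]
      exact Nat.choose_succ_succ _ _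
    have a2 : (2 * r + 2).choose (j + 1)
        = (2 * r + 1).choose j + (2 * r + 1).choose (j + 1) := by
      rw [show 2 * r + 2 = (2 * r + 1) + 1 by ring]
      exact Nat.choose_succ_succ _ _
    have a3 : (2 * r + 2).choose (j + 2)
        = (2 * r + 1).choose (j + 1) + (2 * r + 1).choose (j + 2) := by
      rw [show 2 * r + 2 = (2 * r + 1) + 1 by ring, show j + 2 = (j + 1) + 1 by ring]
      exact Nat.choose_succ_succ _ _
    have h1 : (2 * r + 3).choose (j + 2)
        = (2 * r + 1).choose j + 2 * (2 * r + 1).choose (j + 1)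
          + (2 * r + 1).choose (j + 2) := by
      rw [a1, a2, a3]; ring
    rw [h1]; push_cast; ring
  -- pointwise decomposition of each summand
  have hpt : ∀ j ∈ Finset.Icc r (2 * r + 1),
      ((2 * r + 3).choose (j + 2) : ℝ) * p ^ (j + 2) * q ^ (2 * r + 1 - j)
      = p ^ 2 * b j + 2 * p * q * b (j + 1) + q ^ 2 * b (j + 2) := by
    intro j hj
    rw [Finset.mem_Icc] at hj
    rw [pas j]
    have e1 : p ^ (j + 2) = p ^ j * p ^ 2 := by ring
    -- middle term
    have e2 : ((2 * r + 1).choose (j + 1) : ℝ) * p ^ (j + 2) * q ^ (2 * r + 1 - j)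
        = p * q * b (j + 1) := by
      rcases Nat.lt_or_ge j (2 * r + 1) with h | h
      · have : 2 * r + 1 - j = (2 * r + 1 - (j + 1)) + 1 := by omega
        rw [this, hb]
        simp only
        ring
      · have hj2 : 2 * r + 1 < j + 1 := by omega
        rw [bzero _ hj2]
        simp [Nat.choose_eq_zero_of_lt hj2]
    have e3 : ((2 * r + 1).choose (j + 2) : ℝ) * p ^ (j + 2) * q ^ (2 * r + 1 - j)
        = q ^ 2 * b (j + 2) := by
      rcases Nat.lt_or_ge (j + 1) (2 * r + 1) with h | h
      · have : 2 * r + 1 - j = (2 * r + 1 - (j + 2)) + 2 := by omega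
        rw [this, hb]
        simp only
        ring
      · have hj2 : 2 * r + 1 < j + 2 := by omega
        rw [bzero _ hj2]
        simp [Nat.choose_eq_zero_of_lt hj2]
    have e0 : ((2 * r + 1).choose j : ℝ) * p ^ (j + 2) * q ^ (2 * r + 1 - j)
        = p ^ 2 * b j := by
      rw [hb]; simp only; ring
    calc (((2 * r + 1).choose j : ℝ) + 2 * ((2 * r + 1).choose (j + 1) : ℝ)
          + ((2 * r + 1).choose (j + 2) : ℝ)) * p ^ (j + 2) * q ^ (2 * r + 1 - j)
        = ((2 * r + 1).choose j : ℝ) * p ^ (j + 2) * q ^ (2 * r + 1 - j)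
          + 2 * (((2 * r + 1).choose (j + 1) : ℝ) * p ^ (j + 2) * q ^ (2 * r + 1 - j))
          + ((2 * r + 1).choose (j + 2) : ℝ) * p ^ (j + 2) * q ^ (2 * r + 1 - j) := by ring
      _ = p ^ 2 * b j + 2 * p * q * b (j + 1) + q ^ 2 * b (j + 2) := by
          rw [e0, e2, e3]; ring
  -- the three partial sums
  have sumA : ∑ j ∈ Finset.Icc r (2 * r + 1), b j = b r + S := by
    rw [Finset.Icc_eq_cons_Ioc (by omega), Finset.sum_cons, ← Finset.Icc_add_one_left_eq_Ioc, hS]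
  have sumB : ∑ j ∈ Finset.Icc r (2 * r + 1), b (j + 1) = S := by
    rw [show (∑ j ∈ Finset.Icc r (2 * r + 1), b (j + 1))
        = ∑ k ∈ Finset.Icc (r + 1) (2 * r + 2), b k by
      rw [show Finset.Icc (r + 1) (2 * r + 2) = (Finset.Icc r (2 * r + 1)).map
          (addRightEmbedding 1) by rw [Finset.map_add_right_Icc], Finset.sum_map]
      simp [addRightEmbedding_apply]]
    rw [show 2 * r + 2 = (2 * r + 1) + 1 by ring,
      Finset.sum_Icc_succ_top (by omega), bzero (2 * r + 1 + 1) (by omega), hS, add_zero]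
  have sumC : ∑ j ∈ Finset.Icc r (2 * r + 1), b (j + 2) = S - b (r + 1) := by
    rw [show (∑ j ∈ Finset.Icc r (2 * r + 1), b (j + 2))
        = ∑ k ∈ Finset.Icc (r + 2) (2 * r + 3), b k by
      rw [show Finset.Icc (r + 2) (2 * r + 3) = (Finset.Icc r (2 * r + 1)).map
          (addRightEmbedding 2) by rw [Finset.map_add_right_Icc], Finset.sum_map]
      simp [addRightEmbedding_apply]]
    rw [show 2 * r + 3 = (2 * r + 2) + 1 by ring,
      Finset.sum_Icc_succ_top (by omega), bzero (2 * r + 2 + 1) (by omega), add_zero,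
      show 2 * r + 2 = (2 * r + 1) + 1 by ring,
      Finset.sum_Icc_succ_top (by omega), bzero (2 * r + 1 + 1) (by omega), add_zero,
      hSsplit]
    ring
  -- the key identity
  have key : ∑ k ∈ Finset.Icc (r + 2) (2 * r + 3),
        ((2 * r + 3).choose k : ℝ) * p ^ k * q ^ (2 * r + 3 - k)
      = S + p ^ 2 * b r - q ^ 2 * b (r + 1) := by
    rw [hre, Finset.sum_congr rfl hpt, Finset.sum_add_distrib, Finset.sum_add_distrib,
      ← Finset.mul_sum, ← Finset.mul_sum, ← Finset.mul_sum, sumA, sumB, sumC]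
    have hpq : p + q = 1 := by rw [hq]; ring
    linear_combination S * (p + q + 1) * hpq
  -- evaluate the difference term
  have hbr : b r = ((2 * r + 1).choose r : ℝ) * p ^ r * q ^ (r + 1) := by
    rw [hb]; simp only; congr 2; omega
  have hbr1 : b (r + 1) = ((2 * r + 1).choose r : ℝ) * p ^ (r + 1) * q ^ r := by
    rw [hb]; simp only
    have hc : (2 * r + 1).choose (r + 1) = (2 * r + 1).choose r := by
      rw [show r + 1 = 2 * r + 1 - r by omega]
      exact Nat.choose_symm (by omega)
    rw [hc]
    congr 2
    omega
  have hD : p ^ 2 * b r - q ^ 2 * b (r + 1)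
      = ((2 * r + 1).choose r : ℝ) * p ^ (r + 1) * q ^ (r + 1) * (p - q) := by
    rw [hbr, hbr1]; ring
  have hpos : 0 < ((2 * r + 1).choose r : ℝ) * p ^ (r + 1) * q ^ (r + 1) * (p - q) := by
    have h1 : 0 < ((2 * r + 1).choose r : ℝ) := by
      exact_mod_cast Nat.choose_pos (by omega)
    have h2 : 0 < p - q := by rw [hq]; linarith
    positivity
  calc S < S + (p ^ 2 * b r - q ^ 2 * b (r + 1)) := by rw [hD]; linarith
    _ = ∑ k ∈ Finset.Icc (r + 2) (2 * r + 3),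
        ((2 * r + 3).choose k : ℝ) * p ^ k * q ^ (2 * r + 3 - k) := by rw [key]; ring
end
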